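/- Assume in addition the inversion symmetry ε(x) = ε(1−x) and μ(x) = μ(1−x) for all x ∈ ℝ. Let E ∈ ℝ with |D(E)| > 2 (E lies in a spectral band gap). Then ψ_{E,2}(1) ≠ 0, and for every eigenvalue λ ∈ ℂ of M(E) one has λ ≠ ψ_{E,1}(1); in particular λ_{E,1} − ψ_{E,1}(1) ≠ 0 and λ_{E,2} − ψ_{E,1}(1) ≠ 0 where λ_{E,1}, λ_{E,2} are the two eigenvalues of M(E). -/

import Mathlib

open Matrix

theorem gap_monodromy_entries_nonzero
    (ε μ : ℝ → ℝ)
    (hεc : Continuous ε) (hμc : Continuous μ)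
    (hεp : ∀ x, ε (x + 1) = ε x) (hμp : ∀ x, μ (x + 1) = μ x)
    (hεpos : ∀ x, 0 < ε x) (hμpos : ∀ x, 0 < μ x)
    (hεsym : ∀ x, ε x = ε (1 - x)) (hμsym : ∀ x, μ x = μ (1 - x))
    (E : ℝ)
    (Ψ : ℝ → Matrix (Fin 2) (Fin 2) ℝ)
    (hΨ0 : Ψ 0 = 1)
    (hΨ : ∀ x, ∀ i j, HasDerivAt (fun y => Ψ y i j)
      ((!![(0 : ℝ), μ x; -E * ε x, 0] * Ψ x) i j) x)
    (hgap : |(Ψ 1).trace| > 2) :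
    Ψ 1 0 1 ≠ 0 ∧
    ∀ l : ℂ, (((Ψ 1).map ((↑·) : ℝ → ℂ)).charpoly.IsRoot l → l ≠ (Ψ 1 0 0 : ℂ)) := by
  have h00 : ∀ x, HasDerivAt (fun y => Ψ y 0 0) (μ x * Ψ x 1 0) x := by
    intro x
    simpa [Matrix.mul_apply, Fin.sum_univ_two] using hΨ x 0 0
  have h01 : ∀ x, HasDerivAt (fun y => Ψ y 0 1) (μ x * Ψ x 1 1) x := by
    intro x
    simpa [Matrix.mul_apply, Fin.sum_univ_two] using hΨ x 0 1
  have h10 : ∀ x, HasDerivAt (fun y => Ψ y 1 0) (-E * ε x * Ψ x 0 0) x := by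
    intro x
    simpa [Matrix.mul_apply, Fin.sum_univ_two] using hΨ x 1 0
  have h11 : ∀ x, HasDerivAt (fun y => Ψ y 1 1) (-E * ε x * Ψ x 0 1) x := by
    intro x
    simpa [Matrix.mul_apply, Fin.sum_univ_two] using hΨ x 1 1
  -- Wronskian: det Ψ x is constant = 1
  have hg : ∀ x, HasDerivAt (fun y => Ψ y 0 0 * Ψ y 1 1 - Ψ y 0 1 * Ψ y 1 0) 0 x := by
    intro x
    have := ((h00 x).mul (h11 x)).sub ((h01 x).mul (h10 x))
    exact this.congr_deriv (by ring)
  have hdet : Ψ 1 0 0 * Ψ 1 1 1 - Ψ 1 0 1 * Ψ 1 1 0 = 1 := by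
    have hc := is_const_of_deriv_eq_zero
      (f := fun y => Ψ y 0 0 * Ψ y 1 1 - Ψ y 0 1 * Ψ y 1 0)
      (fun x => (hg x).differentiableAt) (fun x => (hg x).deriv) 1 0
    simpa [hΨ0, Matrix.one_apply] using hc
  -- symmetry invariant: Ψ 1 0 0 = Ψ 1 1 1
  have hf : ∀ x, HasDerivAt
      (fun y => Ψ (1 - y) 1 1 * Ψ y 0 0 + Ψ (1 - y) 0 1 * Ψ y 1 0) 0 x := by
    intro x
    have hlin : HasDerivAt (fun y : ℝ => 1 - y) (-1) x := by
      simpa using (hasDerivAt_id x).const_sub 1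
    have H11 : HasDerivAt (fun y => Ψ (1 - y) 1 1)
        ((-E * ε (1 - x) * Ψ (1 - x) 0 1) * (-1)) x := (h11 (1 - x)).comp x hlin
    have H01 : HasDerivAt (fun y => Ψ (1 - y) 0 1)
        ((μ (1 - x) * Ψ (1 - x) 1 1) * (-1)) x := (h01 (1 - x)).comp x hlin
    have := (H11.mul (h00 x)).add (H01.mul (h10 x))
    refine this.congr_deriv ?_
    rw [← hεsym x, ← hμsym x]
    ring
  have hsym : Ψ 1 1 1 = Ψ 1 0 0 := by
    have hc := is_const_of_deriv_eq_zero
      (f := fun y => Ψ (1 - y) 1 1 * Ψ y 0 0 + Ψ (1 - y) 0 1 * Ψ y 1 0)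
      (fun x => (hf x).differentiableAt) (fun x => (hf x).deriv) 0 1
    simpa [hΨ0, Matrix.one_apply] using hc
  set a := Ψ 1 0 0 with ha
  set b := Ψ 1 0 1 with hb
  set c := Ψ 1 1 0 with hc
  have htr : (Ψ 1).trace = a + a := by
    rw [Matrix.trace_fin_two, hsym]
  have ha2 : 1 < a ^ 2 := by
    rw [htr] at hgap
    have habs : |a + a| = 2 * |a| := by rw [← two_mul, abs_mul]; simp
    have : 1 < |a| := by rw [habs] at hgap; linarith
    calc 1 = 1 ^ 2 := by ring
    _ < |a| ^ 2 := by
      apply pow_lt_pow_left₀ this (by norm_num) (by norm_num)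
    _ = a ^ 2 := sq_abs a
  have hbc : b * c = a ^ 2 - 1 := by
    rw [hsym] at hdet; nlinarith [hdet]
  have hbne : b ≠ 0 := by
    intro h
    rw [h] at hbc
    nlinarith
  refine ⟨hbne, ?_⟩
  intro l hroot hla
  have hev : (((Ψ 1).map ((↑·) : ℝ → ℂ)).charpoly).eval l
      = (l - (a : ℂ)) * (l - (Ψ 1 1 1 : ℂ)) - (b : ℂ) * (c : ℂ) := by
    rw [Matrix.charpoly, Matrix.det_fin_two]
    simp [charmatrix_apply_eq, charmatrix_apply_ne, Fin.zero_ne_one, Matrix.map_apply]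
    rfl
  rw [Polynomial.IsRoot, hev, hla, hsym] at hroot
  have : ((b : ℂ)) * c = 0 := by linear_combination -hroot
  have hbc0 : b * c = 0 := by exact_mod_cast this
  nlinarith [hbc ▸ hbc0, ha2]
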